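/- Let M be strongly regular, and suppose e : S_δ → ℂ satisfies |e(z)| ≤ |z| h_M(k₃/|z|) on the sector S_δ. Then there exist constants C, K > 0 such that |e(z)| ≤ C h_M(K/|z|) for all z ∈ S_δ. -/

import Mathlib

/-- If `|e(z)| ≤ |z| h_M(k₃/|z|)` on `S_δ`, then `|e(z)| ≤ C h_M(K/|z|)` on `S_δ`. -/
theorem kernel_hM_bound (M : ℕ → ℝ) (A B : ℝ)
    (hpos : ∀ p, 0 < M p) (hM0 : M 0 = 1)
    (hlc : ∀ p : ℕ, (M (p + 1)) ^ 2 ≤ M p * M (p + 2))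
    (hA : 0 < A) (hmg : ∀ p ℓ : ℕ, M (p + ℓ) ≤ A ^ (p + ℓ) * M p * M ℓ)
    (hB : 0 < B)
    (hsnq : ∀ p : ℕ, ∑' ℓ : ℕ, M (p + ℓ) / ((p + ℓ + 1) * M (p + ℓ + 1)) ≤ B * M p / M (p + 1))
    (h : ℝ → ℝ)
    (hdef : ∀ t : ℝ, 0 < t → h t = ⨅ p : ℕ, M p * t ^ p) (h0 : h 0 = 0)
    (δ : ℝ) (hδ : 0 < δ) (k₃ : ℝ) (hk₃ : 0 < k₃) (e : ℂ → ℂ)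
    (hbound : ∀ z ∈ {z : ℂ | z ≠ 0 ∧ |Complex.arg z| < δ * Real.pi / 2},
      ‖e z‖ ≤ ‖z‖ * h (k₃ / ‖z‖)) :
    ∃ C K : ℝ, 0 < C ∧ 0 < K ∧
      ∀ z ∈ {z : ℂ | z ≠ 0 ∧ |Complex.arg z| < δ * Real.pi / 2},
        ‖e z‖ ≤ C * h (K / ‖z‖) := by
  have hM1 : 0 < M 1 := hpos 1
  refine ⟨k₃ * A * M 1, A * k₃, by positivity, by positivity, ?_⟩
  intro z hz
  obtain ⟨hz0, harg⟩ := hz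
  have habs : (0:ℝ) < ‖z‖ := by
    simpa using (norm_pos_iff.mpr hz0)
  set r := ‖z‖ with hr
  have htpos : 0 < k₃ / r := by positivity
  have hb := hbound z ⟨hz0, harg⟩
  rw [hdef _ htpos] at hb
  rw [hdef (A * k₃ / r) (by positivity)]
  refine hb.trans ?_
  have hC : (0:ℝ) < k₃ * A * M 1 := by positivity
  rw [mul_comm (k₃ * A * M 1), ← div_le_iff₀ hC]
  apply le_ciInf
  intro p
  rw [div_le_iff₀ hC]
  have hbdd : BddBelow (Set.range fun q : ℕ => M q * (k₃ / r) ^ q) := by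
    refine ⟨0, ?_⟩
    rintro x ⟨q, rfl⟩
    have := hpos q
    positivity
  have step1 : r * ⨅ q : ℕ, M q * (k₃ / r) ^ q ≤ r * (M (p+1) * (k₃ / r) ^ (p+1)) :=
    mul_le_mul_of_nonneg_left (ciInf_le hbdd (p+1)) habs.le
  refine step1.trans ?_
  have hcalc : r * (M (p+1) * (k₃ / r) ^ (p+1)) = k₃ * (M (p+1) * (k₃ / r) ^ p) := by
    rw [pow_succ]
    field_simp
  rw [hcalc]
  have hMp1 : M (p+1) ≤ A ^ (p+1) * M p * M 1 := hmg p 1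
  have hpowpos : (0:ℝ) < (k₃ / r) ^ p := by positivity
  calc k₃ * (M (p+1) * (k₃ / r) ^ p)
      ≤ k₃ * (A ^ (p+1) * M p * M 1 * (k₃ / r) ^ p) := by
        apply mul_le_mul_of_nonneg_left _ hk₃.le
        exact mul_le_mul_of_nonneg_right hMp1 hpowpos.le
    _ = M p * (A * k₃ / r) ^ p * (k₃ * A * M 1) := by
        rw [mul_div_assoc, mul_pow, pow_succ]
        ring
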